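/- If two physical channel directions located on angle-domain samples differ, θ̄_{n'} = θ̄_n + 2b/N with b a nonzero integer, and f_M > f_c > 0, then the largest-power indices at frequency f_M, defined as n_max(ψ) = argmin_{n₁ ∈ {1,…,N}} |(f_M/f_c) ψ - θ̄_{n₁}|, satisfy |n_max(θ̄_{n'}) - n_max(θ̄_n)| ≥ |b| (assuming in each case the argmin is unique and no wrap-around occurs, i.e., both scaled directions lie in [θ̄_1 - 1/N, θ̄_N + 1/N]). -/

import Mathlib

lemma quad_aux (a c : ℝ) (hc : 0 < c) (h : a * a < (a - c) * (a - c)) : a < c / 2 := by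
  nlinarith

lemma nearest_sample_close (N : ℕ) (hN : 2 ≤ N)
    (θbar : Fin N → ℝ) (hθ : ∀ k, θbar k = (2 * ((k : ℕ) : ℝ) + 1 - N) / N)
    (x : ℝ)
    (h1 : θbar ⟨0, Nat.lt_of_lt_of_le (by norm_num) hN⟩ - 1 / N ≤ x)
    (h2 : x ≤ θbar ⟨N - 1, Nat.sub_lt (Nat.lt_of_lt_of_le (by norm_num) hN) one_pos⟩ + 1 / N)
    (m : Fin N)
    (hm : ∀ k : Fin N, k ≠ m → |x - θbar m| < |x - θbar k|) :
    |x - θbar m| ≤ 1 / N := by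
  have hNr : (0:ℝ) < N := by
    have : (0:ℕ) < N := by omega
    exact_mod_cast this
  have h2N : (0:ℝ) < 2 / N := by positivity
  have h2N1 : (2:ℝ) / N / 2 = 1 / N := by ring
  rw [hθ] at h1 h2 ⊢
  simp only [Fin.val_mk, Nat.cast_zero] at h1 h2
  have hN1 : (((N - 1 : ℕ)) : ℝ) = (N:ℝ) - 1 := by
    have : 1 ≤ N := by omega
    push_cast [this]; ring
  rw [hN1] at h2
  rw [abs_le]
  constructor
  · by_cases h : 0 < (m : ℕ)
    · have hk : ((m:ℕ) - 1) < N := by omega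
      set k : Fin N := ⟨(m:ℕ) - 1, hk⟩
      have hkm : k ≠ m := by
        simp only [k, Fin.ne_iff_vne]
        omega
      have h3 := hm k hkm
      rw [hθ, hθ] at h3
      have h4 := mul_self_lt_mul_self (abs_nonneg _) h3
      rw [abs_mul_abs_self, abs_mul_abs_self] at h4
      have hc : ((((m:ℕ) - 1 : ℕ)) : ℝ) = ((m:ℕ):ℝ) - 1 := by
        have : 1 ≤ (m:ℕ) := h
        push_cast [this]; ring
      rw [show ((k:ℕ):ℝ) = ((m:ℕ):ℝ) - 1 from hc] at h4
      have e : x - (2 * (((m:ℕ):ℝ) - 1) + 1 - N) / N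
          = (x - (2 * ((m:ℕ):ℝ) + 1 - N) / N) + 2 / N := by
        field_simp; ring
      rw [e] at h4
      have h4' : (-(x - (2 * ((m:ℕ):ℝ) + 1 - N) / N)) * (-(x - (2 * ((m:ℕ):ℝ) + 1 - N) / N))
          < (-(x - (2 * ((m:ℕ):ℝ) + 1 - N) / N) - 2 / N) *
            (-(x - (2 * ((m:ℕ):ℝ) + 1 - N) / N) - 2 / N) := by linear_combination h4
      have := quad_aux _ _ h2N h4'
      rw [h2N1] at this
      linarith
    · have hm0 : ((m:ℕ):ℝ) = 0 := by
        have : (m:ℕ) = 0 := by omega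
        rw [this]; norm_num
      rw [hm0]
      linarith
  · by_cases h : (m : ℕ) + 1 < N
    · set k : Fin N := ⟨(m:ℕ) + 1, h⟩
      have hkm : k ≠ m := by
        simp only [k, Fin.ne_iff_vne]
        omega
      have h3 := hm k hkm
      rw [hθ, hθ] at h3
      have h4 := mul_self_lt_mul_self (abs_nonneg _) h3
      rw [abs_mul_abs_self, abs_mul_abs_self] at h4
      have hc : ((k:ℕ):ℝ) = ((m:ℕ):ℝ) + 1 := by push_cast [k]; ring
      rw [hc] at h4
      have e : x - (2 * (((m:ℕ):ℝ) + 1) + 1 - N) / N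
          = (x - (2 * ((m:ℕ):ℝ) + 1 - N) / N) - 2 / N := by
        field_simp; ring
      rw [e] at h4
      have := quad_aux _ _ h2N h4
      rw [h2N1] at this
      linarith
    · have hm0 : ((m:ℕ):ℝ) = (N:ℝ) - 1 := by
        have : (m:ℕ) = N - 1 := by omega
        rw [this, hN1]
      rw [hm0]
      linarith



/-- If two physical channel directions on angle-domain samples differ by
`θ̄ n' = θ̄ n + 2b/N` with `b` a nonzero integer, and `f_M > f_c > 0`, then the
largest-power indices at frequency `f_M`, `n_max(ψ) = argmin_{n₁} |(f_M/f_c)ψ - θ̄ n₁|`,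
satisfy `|n_max(θ̄ n') - n_max(θ̄ n)| ≥ |b|`, assuming each argmin is unique and both
scaled directions lie in `[θ̄ 1 - 1/N, θ̄ N + 1/N]` (no wrap-around). -/
theorem beam_split_index_separation (N : ℕ) (hN : 2 ≤ N)
    (θbar : Fin N → ℝ) (hθ : ∀ k, θbar k = (2 * ((k : ℕ) : ℝ) + 1 - N) / N)
    (fM fc : ℝ) (hfc : 0 < fc) (hfM : fc < fM)
    (b : ℤ) (hb : b ≠ 0)
    (n n' : Fin N) (hshift : θbar n' = θbar n + 2 * (b : ℝ) / N)
    (hrange : θbar ⟨0, by omega⟩ - 1 / N ≤ fM / fc * θbar n ∧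
      fM / fc * θbar n ≤ θbar ⟨N - 1, by omega⟩ + 1 / N)
    (hrange' : θbar ⟨0, by omega⟩ - 1 / N ≤ fM / fc * θbar n' ∧
      fM / fc * θbar n' ≤ θbar ⟨N - 1, by omega⟩ + 1 / N)
    (nmax nmax' : Fin N)
    (hmax : ∀ k : Fin N, k ≠ nmax →
      |fM / fc * θbar n - θbar nmax| < |fM / fc * θbar n - θbar k|)
    (hmax' : ∀ k : Fin N, k ≠ nmax' →
      |fM / fc * θbar n' - θbar nmax'| < |fM / fc * θbar n' - θbar k|) :
    |((nmax' : ℕ) : ℤ) - ((nmax : ℕ) : ℤ)| ≥ |b| := by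
  have hNr : (0:ℝ) < N := by
    have : (0:ℕ) < N := by omega
    exact_mod_cast this
  have hr : 1 < fM / fc := (one_lt_div hfc).mpr hfM
  set x := fM / fc * θbar n with hx
  set x' := fM / fc * θbar n' with hx'
  have hclose : |x - θbar nmax| ≤ 1 / N :=
    nearest_sample_close N hN θbar hθ x hrange.1 hrange.2 nmax hmax
  have hclose' : |x' - θbar nmax'| ≤ 1 / N :=
    nearest_sample_close N hN θbar hθ x' hrange'.1 hrange'.2 nmax' hmax'
  -- distance between the two scaled directions
  have hxx : x' - x = fM / fc * (2 * (b:ℝ) / N) := by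
    rw [hx, hx', hshift]; ring
  have hbabs : (1:ℝ) ≤ |(b:ℝ)| := by
    have h1 : (1:ℤ) ≤ |b| := Int.one_le_abs hb
    exact_mod_cast h1
  have hxxabs : 2 * |(b:ℝ)| / N < |x' - x| := by
    rw [hxx]
    have he : |fM / fc * (2 * (b:ℝ) / N)| = fM / fc * (2 * |(b:ℝ)| / N) := by
      rw [abs_mul, abs_of_pos (lt_trans one_pos hr), abs_div, abs_mul,
        abs_of_pos hNr, show |(2:ℝ)| = 2 by norm_num]
    rw [he]
    have hpos : 0 < 2 * |(b:ℝ)| / N := by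
      apply div_pos _ hNr
      linarith
    exact (lt_mul_iff_one_lt_left hpos).mpr hr
  -- distance between the two sample points
  have hθθ : |θbar nmax' - θbar nmax| = 2 * |((nmax':ℕ):ℝ) - ((nmax:ℕ):ℝ)| / N := by
    rw [hθ, hθ]
    rw [show (2 * ((nmax':ℕ):ℝ) + 1 - N) / N - (2 * ((nmax:ℕ):ℝ) + 1 - N) / N
        = 2 * (((nmax':ℕ):ℝ) - ((nmax:ℕ):ℝ)) / N by field_simp; ring]
    rw [abs_div, abs_mul, abs_of_pos hNr, show |(2:ℝ)| = 2 by norm_num]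
  -- triangle inequality
  have htri : |x' - x| ≤ |x' - θbar nmax'| + |θbar nmax' - θbar nmax| + |θbar nmax - x| := by
    calc |x' - x| = |(x' - θbar nmax') + (θbar nmax' - θbar nmax) + (θbar nmax - x)| := by
          ring_nf
      _ ≤ |(x' - θbar nmax') + (θbar nmax' - θbar nmax)| + |θbar nmax - x| := abs_add_le _ _
      _ ≤ |x' - θbar nmax'| + |θbar nmax' - θbar nmax| + |θbar nmax - x| := by
          gcongr; exact abs_add_le _ _
  rw [abs_sub_comm (θbar nmax) x] at htri
  rw [hθθ] at htri
  -- conclude over the reals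
  have hkey : (|b|:ℝ) - 1 < |((nmax':ℕ):ℝ) - ((nmax:ℕ):ℝ)| := by
    have h5 : 2 * |(b:ℝ)| / N < 1 / N + 2 * |((nmax':ℕ):ℝ) - ((nmax:ℕ):ℝ)| / N + 1 / N := by
      linarith
    have h6 := mul_lt_mul_of_pos_right h5 hNr
    have hNe : (N:ℝ) ≠ 0 := hNr.ne'
    field_simp at h6
    linarith
  have hcast : |((nmax':ℕ):ℝ) - ((nmax:ℕ):ℝ)| = ((|((nmax':ℕ):ℤ) - ((nmax:ℕ):ℤ)|:ℤ):ℝ) := by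
    push_cast; ring
  rw [hcast] at hkey
  have : (|b| - 1 : ℤ) < |((nmax':ℕ):ℤ) - ((nmax:ℕ):ℤ)| := by exact_mod_cast hkey
  omega
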